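/- Let G be a solvable group and H a proper subgroup of G. Then the union of the conjugates of H is not all of G; that is, there exists g ∈ G such that g ∉ xHx⁻¹ for every x ∈ G. -/

import Mathlib

open scoped commutatorElement

private theorem aux_solvable_conj (n : ℕ) :
    ∀ (G : Type*) [Group G], derivedSeries G n = ⊥ → ∀ (H : Subgroup G), H ≠ ⊤ →
      ∃ g : G, ∀ x : G, x⁻¹ * g * x ∉ H := by
  induction n with
  | zero =>
    intro G _ hbot H hH
    rw [derivedSeries_zero] at hbot
    exact absurd (Subgroup.eq_top_iff' H |>.2 fun x => by
      have : x = 1 := by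
        have : x ∈ (⊤ : Subgroup G) := trivial
        rw [hbot] at this
        simpa using this
      rw [this]; exact H.one_mem) hH
  | succ m ih =>
    intro G _ hbot H hH
    set A := derivedSeries G m with hA
    haveI : A.Normal := derivedSeries_normal G m
    by_cases hc : A ⊔ H = ⊤
    · -- union case: pick a ∈ A \ H
      have hAH : ¬ A ≤ H := by
        intro hle
        exact hH (by rwa [sup_eq_right.2 hle] at hc)
      obtain ⟨a, haA, haH⟩ := SetLike.not_le_iff_exists.mp hAH
      refine ⟨a, fun x hx => ?_⟩
      have hx' : x ∈ A ⊔ H := hc ▸ trivial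
      have hx'' : x ∈ (↑(A ⊔ H) : Set G) := hx'
      rw [Subgroup.normal_mul] at hx''
      obtain ⟨a', ha', h, hh, rfl⟩ := hx''
      -- a and a' commute since ⁅A,A⁆ = ⊥
      have hcomm : a' * a = a * a' := by
        have : ⁅a', a⁆ ∈ ⁅A, A⁆ := Subgroup.commutator_mem_commutator ha' haA
        rw [← derivedSeries_succ, hbot, Subgroup.mem_bot, commutatorElement_def] at this
        have h1 : a' * a * a'⁻¹ = a := mul_inv_eq_one.mp this
        exact mul_inv_eq_iff_eq_mul.mp h1
      have key : (a' * h)⁻¹ * a * (a' * h) = h⁻¹ * a * h := by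
        rw [mul_inv_rev]
        calc h⁻¹ * a'⁻¹ * a * (a' * h) = h⁻¹ * (a'⁻¹ * (a * a')) * h := by group
        _ = h⁻¹ * a * h := by rw [← hcomm]; group
      rw [key] at hx
      have : a ∈ H := by
        have := H.mul_mem (H.mul_mem hh hx) (H.inv_mem hh)
        simpa [mul_assoc] using this
      exact haH this
    · -- quotient case
      let φ := QuotientGroup.mk' A
      have hφ : Function.Surjective φ := QuotientGroup.mk'_surjective A
      have hker : φ.ker = A := QuotientGroup.ker_mk' A
      have hq : derivedSeries (G ⧸ A) m = ⊥ := by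
        rw [← map_derivedSeries_eq hφ, ← hA]
        rw [Subgroup.map_eq_bot_iff, hker]
      have hH' : (A ⊔ H).map φ ≠ ⊤ := by
        intro htop
        apply hc
        have := Subgroup.comap_map_eq φ (A ⊔ H)
        rw [htop, Subgroup.comap_top, hker, sup_comm A H, sup_assoc, sup_idem,
          sup_comm H A] at this
        exact this.symm
      obtain ⟨q, hq'⟩ := ih (G ⧸ A) hq ((A ⊔ H).map φ) hH'
      obtain ⟨g, rfl⟩ := hφ q
      refine ⟨g, fun x hx => ?_⟩
      apply hq' (φ x)
      have : φ (x⁻¹ * g * x) ∈ (A ⊔ H).map φ :=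
        Subgroup.mem_map_of_mem φ (Subgroup.mem_sup_right hx)
      simpa using this

/-- If `G` is a solvable group and `H` is a proper subgroup, then the union of all
conjugates of `H` is not all of `G`: some `g ∈ G` lies in no conjugate `xHx⁻¹`. -/
theorem solvable_union_conjugates_ne
    (G : Type*) [Group G] [Group.IsSolvable G] (H : Subgroup G) (hH : H ≠ ⊤) :
    ∃ g : G, ∀ x : G, x⁻¹ * g * x ∉ H := by
  obtain ⟨n, hn⟩ := Group.IsSolvable.solvable (G := G)
  exact aux_solvable_conj n G hn H hH
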